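/- Let f_1, f_2, f_3, f_4 ∈ [1/13, 1/2] with f_1 + f_2 + f_3 + f_4 = 1 and f_j ≤ 4f_1 for j = 2, 3, 4, and let y_1, y_2, y_3, y_4 ∈ [0, 1/2]. Set A = Σ_{j=1}^{4}(1 − f_j)(1 − y_j), F_k = (1 − f_k)(1 − y_k)/A for k = 1,…,4, and D_j = 1/(1 − f_1) − Σ_{k∈{1,2,3,4}∖{j}} F_k/(1 − f_k) for j = 2, 3, 4. Then at least two of the three numbers D_2, D_3, D_4 are nonnegative; equivalently, for no two distinct indices j, j' ∈ {2, 3, 4} can both D_j < 0 and D_{j'} < 0 hold. -/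

import Mathlib

lemma pair_key (f1 fj fj' fm yj yj' ym : ℝ)
    (hf1l : 1/13 ≤ f1)
    (hfj : fj ≤ 1/2) (hfj' : fj' ≤ 1/2)
    (hm : fm ≤ 4 * f1)
    (hsum : f1 + fj + fj' + fm = 1)
    (hyj : yj ≤ 1/2) (hyj' : yj' ≤ 1/2) (hym0 : 0 ≤ ym) (hym : ym ≤ 1/2)
    (h1 : (1-fj)*(1-yj) + (1-fj')*(1-yj') + (1-fm)*(1-ym)
      < (1-f1)*((1-yj')+(1-ym)))
    (h2 : (1-fj)*(1-yj) + (1-fj')*(1-yj') + (1-fm)*(1-ym)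
      < (1-f1)*((1-yj)+(1-ym))) : False := by
  nlinarith [mul_nonneg (by nlinarith : (0:ℝ) ≤ 1 + f1 - 2*fj) (by linarith : (0:ℝ) ≤ 1 - 2*yj),
    mul_nonneg (by nlinarith : (0:ℝ) ≤ 1 + f1 - 2*fj') (by linarith : (0:ℝ) ≤ 1 - 2*yj'),
    mul_nonneg (by linarith : (0:ℝ) ≤ 4*f1 - fm) hym0,
    mul_nonneg (by linarith : (0:ℝ) ≤ 4*f1 - fm) (by linarith : (0:ℝ) ≤ 1 - 2*ym)]

set_option maxHeartbeats 2000000 in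
/-- At least two of the three quantities `D₂, D₃, D₄` are nonnegative, where
`D_j = 1/(1 − f₁) − Σ_{k ≠ j} F_k/(1 − f_k)` with `F_k = (1 − f_k)(1 − y_k)/A` and
`A = Σ_j (1 − f_j)(1 − y_j)`, under the hypotheses `f_j ∈ [1/13, 1/2]`,
`Σ f_j = 1`, `f_j ≤ 4f₁` for `j = 2, 3, 4`, and `y_j ∈ [0, 1/2]`. -/
theorem two_nonnegative (f1 f2 f3 f4 y1 y2 y3 y4 : ℝ)
    (hf1 : f1 ∈ Set.Icc (1 / 13 : ℝ) (1 / 2)) (hf2 : f2 ∈ Set.Icc (1 / 13 : ℝ) (1 / 2))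
    (hf3 : f3 ∈ Set.Icc (1 / 13 : ℝ) (1 / 2)) (hf4 : f4 ∈ Set.Icc (1 / 13 : ℝ) (1 / 2))
    (hsum : f1 + f2 + f3 + f4 = 1)
    (hr2 : f2 ≤ 4 * f1) (hr3 : f3 ≤ 4 * f1) (hr4 : f4 ≤ 4 * f1)
    (hy1 : y1 ∈ Set.Icc (0 : ℝ) (1 / 2)) (hy2 : y2 ∈ Set.Icc (0 : ℝ) (1 / 2))
    (hy3 : y3 ∈ Set.Icc (0 : ℝ) (1 / 2)) (hy4 : y4 ∈ Set.Icc (0 : ℝ) (1 / 2)) :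
    let A := (1 - f1) * (1 - y1) + (1 - f2) * (1 - y2) +
      (1 - f3) * (1 - y3) + (1 - f4) * (1 - y4)
    let F1 := (1 - f1) * (1 - y1) / A
    let F2 := (1 - f2) * (1 - y2) / A
    let F3 := (1 - f3) * (1 - y3) / A
    let F4 := (1 - f4) * (1 - y4) / A
    let D2 := 1 / (1 - f1) - (F1 / (1 - f1) + F3 / (1 - f3) + F4 / (1 - f4))
    let D3 := 1 / (1 - f1) - (F1 / (1 - f1) + F2 / (1 - f2) + F4 / (1 - f4))
    let D4 := 1 / (1 - f1) - (F1 / (1 - f1) + F2 / (1 - f2) + F3 / (1 - f3))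
    (0 ≤ D2 ∧ 0 ≤ D3) ∨ (0 ≤ D2 ∧ 0 ≤ D4) ∨ (0 ≤ D3 ∧ 0 ≤ D4) := by
  obtain ⟨hf1l, hf1u⟩ := hf1
  obtain ⟨hf2l, hf2u⟩ := hf2
  obtain ⟨hf3l, hf3u⟩ := hf3
  obtain ⟨hf4l, hf4u⟩ := hf4
  obtain ⟨hy1l, hy1u⟩ := hy1
  obtain ⟨hy2l, hy2u⟩ := hy2
  obtain ⟨hy3l, hy3u⟩ := hy3
  obtain ⟨hy4l, hy4u⟩ := hy4
  intro A F1 F2 F3 F4 D2 D3 D4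
  have h1p : (0:ℝ) < 1 - f1 := by linarith
  have h2p : (0:ℝ) < 1 - f2 := by linarith
  have h3p : (0:ℝ) < 1 - f3 := by linarith
  have h4p : (0:ℝ) < 1 - f4 := by linarith
  have hAp : (0:ℝ) < A := by
    unfold A; nlinarith
  have hq : ∀ g y : ℝ, g ≠ 0 → (g * y / A) / g = y / A := fun g y hg => by
    rw [mul_div_assoc, mul_div_cancel_left₀ _ hg]
  have hD2 : D2 = 1/(1-f1) - ((1-y1)+(1-y3)+(1-y4))/A := by
    unfold D2 F1 F3 F4
    rw [hq _ _ h1p.ne', hq _ _ h3p.ne', hq _ _ h4p.ne', ← add_div, ← add_div]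
  have hD3 : D3 = 1/(1-f1) - ((1-y1)+(1-y2)+(1-y4))/A := by
    unfold D3 F1 F2 F4
    rw [hq _ _ h1p.ne', hq _ _ h2p.ne', hq _ _ h4p.ne', ← add_div, ← add_div]
  have hD4 : D4 = 1/(1-f1) - ((1-y1)+(1-y2)+(1-y3))/A := by
    unfold D4 F1 F2 F3
    rw [hq _ _ h1p.ne', hq _ _ h2p.ne', hq _ _ h3p.ne', ← add_div, ← add_div]
  have conv : ∀ D s : ℝ, D = 1/(1-f1) - s/A → ¬ (0 ≤ D) → A < (1-f1) * s := by
    intro D s hs hns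
    have : 1/(1-f1) < s/A := by rw [hs] at hns; push_neg at hns; linarith
    have h := (div_lt_div_iff₀ h1p hAp).mp this
    linarith
  have p23 : 0 ≤ D2 ∨ 0 ≤ D3 := by
    by_contra h
    push_neg at h
    obtain ⟨a2, a3⟩ := h
    have e2 := conv D2 _ hD2 (by linarith)
    have e3 := conv D3 _ hD3 (by linarith)
    have b2 : (1-f2)*(1-y2) + (1-f3)*(1-y3) + (1-f4)*(1-y4)
        < (1-f1)*((1-y3)+(1-y4)) := by unfold A at e2; linarith [e2]
    have b3 : (1-f2)*(1-y2) + (1-f3)*(1-y3) + (1-f4)*(1-y4)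
        < (1-f1)*((1-y2)+(1-y4)) := by unfold A at e3; linarith [e3]
    exact pair_key f1 f2 f3 f4 y2 y3 y4 hf1l hf2u hf3u hr4 hsum hy2u hy3u hy4l hy4u b2 b3
  have p24 : 0 ≤ D2 ∨ 0 ≤ D4 := by
    by_contra h
    push_neg at h
    obtain ⟨a2, a4⟩ := h
    have e2 := conv D2 _ hD2 (by linarith)
    have e4 := conv D4 _ hD4 (by linarith)
    have b2 : (1-f2)*(1-y2) + (1-f4)*(1-y4) + (1-f3)*(1-y3)
        < (1-f1)*((1-y4)+(1-y3)) := by unfold A at e2; linarith [e2]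
    have b4 : (1-f2)*(1-y2) + (1-f4)*(1-y4) + (1-f3)*(1-y3)
        < (1-f1)*((1-y2)+(1-y3)) := by unfold A at e4; linarith [e4]
    exact pair_key f1 f2 f4 f3 y2 y4 y3 hf1l hf2u hf4u hr3 (by linarith) hy2u hy4u hy3l hy3u b2 b4
  have p34 : 0 ≤ D3 ∨ 0 ≤ D4 := by
    by_contra h
    push_neg at h
    obtain ⟨a3, a4⟩ := h
    have e3 := conv D3 _ hD3 (by linarith)
    have e4 := conv D4 _ hD4 (by linarith)
    have b3 : (1-f3)*(1-y3) + (1-f4)*(1-y4) + (1-f2)*(1-y2)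
        < (1-f1)*((1-y4)+(1-y2)) := by unfold A at e3; linarith [e3]
    have b4 : (1-f3)*(1-y3) + (1-f4)*(1-y4) + (1-f2)*(1-y2)
        < (1-f1)*((1-y3)+(1-y2)) := by unfold A at e4; linarith [e4]
    exact pair_key f1 f3 f4 f2 y3 y4 y2 hf1l hf3u hf4u hr2 (by linarith) hy3u hy4u hy2l hy2u b3 b4
  tauto
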